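/- Let T : [0,1] → [0,1] be continuous, strictly increasing, onto, twice differentiable on (0,1), with T' strictly decreasing on (0,b) and strictly increasing on (b,1) for some b ∈ (0,1), T'(0+) > 1 and T'(1-) = +∞. Define f(z) = (1-T(z))/(1-z) for z ∈ [0,1). Then there exists a unique a ∈ (0,b) such that f is strictly decreasing on [0,a] and strictly increasing on [a,1). Moreover, a satisfies T'(a) = (1-T(a))/(1-a). -/

import Mathlib

open Set Filter

/-- for an inverse-S shaped probability weighting function `T`,
the function `f(z) = (1-T(z))/(1-z)` is strictly decreasing then strictly
increasing, with a unique turning point `a ∈ (0,b)` satisfying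
`T'(a) = (1-T(a))/(1-a)`. -/
theorem exists_unique_turning_point
    (T : ℝ → ℝ) (b : ℝ) (hb : b ∈ Ioo (0:ℝ) 1)
    (hTcont : ContinuousOn T (Icc 0 1))
    (hTmono : StrictMonoOn T (Icc 0 1))
    (hT0 : T 0 = 0) (hT1 : T 1 = 1)
    (hTdiff : ∀ z ∈ Ioo (0:ℝ) 1, DifferentiableAt ℝ T z)
    (hTdiff2 : ∀ z ∈ Ioo (0:ℝ) 1, DifferentiableAt ℝ (deriv T) z)
    (hT'anti : StrictAntiOn (deriv T) (Ioo 0 b))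
    (hT'mono : StrictMonoOn (deriv T) (Ioo b 1))
    (L : ℝ) (hT'0 : Tendsto (deriv T) (nhdsWithin 0 (Ioi 0)) (nhds L)) (hL : 1 < L)
    (hT'1 : Tendsto (deriv T) (nhdsWithin 1 (Iio 1)) atTop) :
    ∃! a : ℝ, a ∈ Ioo 0 b ∧
      StrictAntiOn (fun z => (1 - T z) / (1 - z)) (Icc 0 a) ∧
      StrictMonoOn (fun z => (1 - T z) / (1 - z)) (Ico a 1) ∧
      deriv T a = (1 - T a) / (1 - a) := by
  obtain ⟨hb0, hb1⟩ := hb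
  set g : ℝ → ℝ := fun z => (1 - T z) - deriv T z * (1 - z) with hg_def
  -- Mean value theorem on [x,1]
  have hmvt : ∀ x ∈ Ico (0:ℝ) 1, ∃ c ∈ Ioo x 1, deriv T c * (1 - x) = 1 - T x := by
    intro x hx
    obtain ⟨c, hc, hceq⟩ := exists_hasDerivAt_eq_slope T (deriv T) hx.2
      (hTcont.mono (Icc_subset_Icc hx.1 le_rfl))
      (fun y hy => (hTdiff y ⟨lt_of_le_of_lt hx.1 hy.1, hy.2⟩).hasDerivAt)
    refine ⟨c, hc, ?_⟩
    rw [hceq, hT1, div_mul_cancel₀ _ (sub_ne_zero.mpr hx.2.ne')]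
  -- g is strictly increasing on (0,b)
  have hgmono : ∀ x ∈ Ioo (0:ℝ) b, ∀ y ∈ Ioo (0:ℝ) b, x < y → g x < g y := by
    intro x hx y hy hxy
    obtain ⟨c, hc, hceq⟩ := exists_hasDerivAt_eq_slope T (deriv T) hxy
      (hTcont.mono (Icc_subset_Icc hx.1.le (hy.2.le.trans hb1.le)))
      (fun t ht => (hTdiff t ⟨hx.1.trans ht.1, ht.2.trans (hy.2.trans_le hb1.le)⟩).hasDerivAt)
    have hc1 : c ∈ Ioo (0:ℝ) b := ⟨hx.1.trans hc.1, hc.2.trans hy.2⟩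
    have h1 : deriv T c < deriv T x := hT'anti hx hc1 hc.1
    have h2 : deriv T y < deriv T c := hT'anti hc1 hy hc.2
    have hceq' : deriv T c * (y - x) = T y - T x := by
      rw [hceq, div_mul_cancel₀ _ (sub_ne_zero.mpr hxy.ne')]
    have hx1 : x < 1 := hx.2.trans hb1
    have hy1 : y < 1 := hy.2.trans hb1
    simp only [hg_def]
    nlinarith [mul_pos (sub_pos.mpr h1) (sub_pos.mpr hx1),
      mul_pos (sub_pos.mpr h2) (sub_pos.mpr hy1)]
  -- deriv T b ≤ deriv T y for y ∈ (b,1)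
  have hT'le : ∀ y ∈ Ioo b 1, deriv T b ≤ deriv T y := by
    intro y hy
    have hcont : Tendsto (deriv T) (nhdsWithin b (Ioo b y)) (nhds (deriv T b)) :=
      ((hTdiff2 b ⟨hb0, hb1⟩).continuousAt.tendsto).mono_left nhdsWithin_le_nhds
    have hne : (nhdsWithin b (Ioo b y)).NeBot := left_nhdsWithin_Ioo_neBot hy.1
    refine le_of_tendsto hcont ?_
    filter_upwards [self_mem_nhdsWithin] with t ht
    exact (hT'mono ⟨ht.1, ht.2.trans hy.2⟩ hy ht.2).le
  -- g is positive on [b,1)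
  have hgpos : ∀ x ∈ Ico b 1, 0 < g x := by
    intro x hx
    obtain ⟨c, hc, hceq⟩ := hmvt x ⟨hb0.le.trans hx.1, hx.2⟩
    have hcb : c ∈ Ioo b 1 := ⟨lt_of_le_of_lt hx.1 hc.1, hc.2⟩
    have hlt : deriv T x < deriv T c := by
      rcases eq_or_lt_of_le hx.1 with h | h
      · set m := (b + c) / 2 with hm_def
        have hm : m ∈ Ioo b 1 := ⟨by simp only [hm_def]; linarith [hcb.1],
          by simp only [hm_def]; linarith [hcb.2, hcb.1]⟩
        have hmc : m < c := by simp only [hm_def]; linarith [hcb.1]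
        have h1 : deriv T b ≤ deriv T m := hT'le m hm
        have h2 : deriv T m < deriv T c := hT'mono hm hcb hmc
        rw [← h]
        linarith
      · exact hT'mono ⟨h, hx.2⟩ hcb hc.1
    have hgx : g x = (deriv T c - deriv T x) * (1 - x) := by
      simp only [hg_def]
      rw [← hceq]; ring
    rw [hgx]
    exact mul_pos (sub_pos.mpr hlt) (sub_pos.mpr hx.2)
  -- find ε near 0 with g ε < 0
  have hgneg : ∃ ε ∈ Ioo (0:ℝ) b, g ε < 0 := by
    have hT0' : Tendsto T (nhdsWithin 0 (Ioo 0 b)) (nhds 0) := by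
      have h := (hTcont 0 (left_mem_Icc.mpr zero_le_one)).tendsto
      rw [hT0] at h
      exact h.mono_left (nhdsWithin_mono 0 (fun t ht => ⟨ht.1.le, (ht.2.trans hb1).le⟩))
    have hd : Tendsto (deriv T) (nhdsWithin 0 (Ioo 0 b)) (nhds L) :=
      hT'0.mono_left (nhdsWithin_mono 0 (fun t ht => ht.1))
    have hz : Tendsto (fun z : ℝ => z) (nhdsWithin 0 (Ioo 0 b)) (nhds 0) :=
      Filter.tendsto_id.mono_left nhdsWithin_le_nhds
    have h1 : Tendsto g (nhdsWithin 0 (Ioo 0 b)) (nhds ((1 - 0) - L * (1 - 0))) :=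
      (tendsto_const_nhds.sub hT0').sub (hd.mul (tendsto_const_nhds.sub hz))
    have h2 : ∀ᶠ z in nhdsWithin 0 (Ioo 0 b), g z < 0 :=
      h1.eventually_lt_const (by linarith)
    have hne : (nhdsWithin 0 (Ioo 0 b)).NeBot := left_nhdsWithin_Ioo_neBot hb0
    obtain ⟨ε, hgε, hε⟩ := (h2.and self_mem_nhdsWithin).exists
    exact ⟨ε, hε, hgε⟩
  obtain ⟨ε, hε, hgε⟩ := hgneg
  -- g continuous on (0,1)
  have hgcont : ∀ x ∈ Ioo (0:ℝ) 1, ContinuousAt g x := by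
    intro x hx
    exact (continuousAt_const.sub (hTdiff x hx).continuousAt).sub
      ((hTdiff2 x hx).continuousAt.mul (continuousAt_const.sub continuousAt_id))
  -- IVT: get a with g a = 0
  obtain ⟨a, ha_mem, hga⟩ : ∃ a ∈ Icc ε b, g a = 0 := by
    have hcont : ContinuousOn g (Icc ε b) := fun x hx =>
      (hgcont x ⟨hε.1.trans_le hx.1, lt_of_le_of_lt hx.2 hb1⟩).continuousWithinAt
    have h0 : (0:ℝ) ∈ Icc (g ε) (g b) := ⟨hgε.le, (hgpos b ⟨le_rfl, hb1⟩).le⟩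
    obtain ⟨a, ha, hga⟩ := intermediate_value_Icc hε.2.le hcont h0
    exact ⟨a, ha, hga⟩
  have haIoo : a ∈ Ioo (0:ℝ) b := by
    refine ⟨hε.1.trans_le ha_mem.1, lt_of_le_of_ne ha_mem.2 ?_⟩
    intro h
    rw [h] at hga
    exact (hgpos b ⟨le_rfl, hb1⟩).ne' hga
  have ha1 : a < 1 := haIoo.2.trans hb1
  -- derivative of f
  have hfderiv : ∀ x ∈ Ioo (0:ℝ) 1,
      HasDerivAt (fun z => (1 - T z) / (1 - z)) (g x / (1 - x) ^ 2) x := by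
    intro x hx
    have h1 : HasDerivAt (fun z => 1 - T z) (0 - deriv T x) x :=
      (hasDerivAt_const x 1).sub (hTdiff x hx).hasDerivAt
    have h2 : HasDerivAt (fun z : ℝ => 1 - z) (0 - 1) x :=
      (hasDerivAt_const x 1).sub (hasDerivAt_id x)
    have hne : 1 - x ≠ 0 := sub_ne_zero.mpr hx.2.ne'
    have h3 := h1.div h2 hne
    convert h3 using 1
    show (1 - T x - deriv T x * (1 - x)) / (1 - x) ^ 2 = _
    field_simp
    ring
    all_goals rfl
  -- continuity of f on [0,1)
  have hfcont : ContinuousOn (fun z => (1 - T z) / (1 - z)) (Ico 0 1) :=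
    (continuousOn_const.sub (hTcont.mono Ico_subset_Icc_self)).div
      (continuousOn_const.sub continuousOn_id) (fun x hx => sub_ne_zero.mpr hx.2.ne')
  -- strict anti on [0,a]
  have hanti : StrictAntiOn (fun z => (1 - T z) / (1 - z)) (Icc 0 a) := by
    apply strictAntiOn_of_deriv_neg (convex_Icc 0 a)
      (hfcont.mono (Icc_subset_Ico_right ha1))
    intro x hx
    rw [interior_Icc] at hx
    have hx' : x ∈ Ioo (0:ℝ) 1 := ⟨hx.1, hx.2.trans ha1⟩
    rw [(hfderiv x hx').deriv]
    apply div_neg_of_neg_of_pos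
    · have := hgmono x ⟨hx.1, hx.2.trans haIoo.2⟩ a haIoo hx.2
      linarith [hga ▸ this]
    · exact pow_pos (sub_pos.mpr hx'.2) 2
  -- strict mono on [a,1)
  have hmono : StrictMonoOn (fun z => (1 - T z) / (1 - z)) (Ico a 1) := by
    apply strictMonoOn_of_deriv_pos (convex_Ico a 1)
      (hfcont.mono (Ico_subset_Ico_left haIoo.1.le))
    intro x hx
    rw [interior_Ico] at hx
    have hx' : x ∈ Ioo (0:ℝ) 1 := ⟨haIoo.1.trans hx.1, hx.2⟩
    rw [(hfderiv x hx').deriv]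
    apply div_pos
    · rcases lt_or_ge x b with h | h
      · have := hgmono a haIoo x ⟨hx'.1, h⟩ hx.1
        linarith [hga ▸ this]
      · exact hgpos x ⟨h, hx.2⟩
    · exact pow_pos (sub_pos.mpr hx'.2) 2
  have heq : deriv T a = (1 - T a) / (1 - a) := by
    have hne : (1:ℝ) - a ≠ 0 := sub_ne_zero.mpr ha1.ne'
    rw [eq_div_iff hne]
    simp only [hg_def] at hga
    linarith
  refine ⟨a, ⟨haIoo, hanti, hmono, heq⟩, ?_⟩
  rintro a' ⟨ha', -, -, heq'⟩
  have hga' : g a' = 0 := by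
    simp only [hg_def]
    rw [heq', div_mul_cancel₀ _ (sub_ne_zero.mpr (ha'.2.trans hb1).ne')]
    ring
  rcases lt_trichotomy a' a with h | h | h
  · have := hgmono a' ha' a haIoo h
    rw [hga, hga'] at this
    exact absurd this (lt_irrefl 0)
  · exact h
  · have := hgmono a haIoo a' ha' h
    rw [hga, hga'] at this
    exact absurd this (lt_irrefl 0)
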